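/- Let H be a finite tree with vertex set partitioned into two classes A and B forming a proper 2-coloring (i.e., every edge joins A to B). Then the number of edges of H is at most the number of leaves of H lying in A plus twice the number of vertices of H lying in B. -/

import Mathlib

open Finset

/-- Let `H` be a finite tree properly 2-colored with classes `A`
and `B` (every edge joins `A` to `B`). Then the number of edges of `H` is at most
the number of leaves of `H` in `A` plus twice the number of vertices in `B`. -/
theorem tree_edge_bound {V : Type*} [Fintype V] (H : SimpleGraph V)
    [DecidableRel H.Adj] (hT : H.IsTree)
    (A B : Set V) (hdisj : Disjoint A B) (hcover : A ∪ B = Set.univ)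
    (hbip : ∀ u v : V, H.Adj u v → (u ∈ A ∧ v ∈ B) ∨ (u ∈ B ∧ v ∈ A)) :
    H.edgeSet.ncard ≤ {v : V | v ∈ A ∧ H.degree v ≤ 1}.ncard + 2 * B.ncard := by
  classical
  set Af : Finset V := Finset.univ.filter (· ∈ A) with hAf
  set Bf : Finset V := Finset.univ.filter (· ∈ B) with hBf
  set L : Finset V := Finset.univ.filter (fun v => v ∈ A ∧ H.degree v ≤ 1) with hLdef
  -- convert ncards to Finset cards
  have hcL : {v : V | v ∈ A ∧ H.degree v ≤ 1}.ncard = L.card := by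
    rw [show {v : V | v ∈ A ∧ H.degree v ≤ 1} = (L : Set V) by ext v; simp [hLdef]]
    exact Set.ncard_coe_finset _
  have hcB : B.ncard = Bf.card := by
    rw [show B = (Bf : Set V) by ext v; simp [hBf]]
    exact Set.ncard_coe_finset _
  have hcE : H.edgeSet.ncard = H.edgeFinset.card := by
    rw [Set.ncard_eq_toFinset_card']
    congr 1
  rw [hcL, hcB, hcE]
  have hE : H.edgeFinset.card + 1 = Fintype.card V := hT.card_edgeFinset
  -- partition of vertices
  have hABcard : Af.card + Bf.card = Fintype.card V := by
    rw [← Finset.card_union_of_disjoint]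
    · congr 1
      ext v
      have := Set.ext_iff.mp hcover v
      simp [hAf, hBf] at *
      simpa using this
    · rw [Finset.disjoint_left]
      intro v hv hv'
      simp [hAf, hBf] at hv hv'
      exact Set.disjoint_left.mp hdisj hv hv'
  -- sum of degrees over A equals number of edges
  have hsum : ∑ v ∈ Af, H.degree v = H.edgeFinset.card := by
    simp_rw [← SimpleGraph.card_neighborFinset_eq_degree]
    rw [← Finset.card_sigma]
    apply Finset.card_bij (fun p _ => s(p.1, p.2))
    · intro p hp
      simp only [Finset.mem_sigma, SimpleGraph.mem_neighborFinset] at hp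
      simpa [SimpleGraph.mem_edgeFinset] using hp.2
    · intro p hp q hq hpq
      simp only [Finset.mem_sigma, SimpleGraph.mem_neighborFinset, hAf,
        Finset.mem_filter] at hp hq
      rw [Sym2.eq_iff] at hpq
      rcases hpq with ⟨h1, h2⟩ | ⟨h1, h2⟩
      · exact Sigma.ext h1 (heq_of_eq h2)
      · exfalso
        have hq2B : q.2 ∈ B := by
          rcases hbip q.1 q.2 hq.2 with ⟨_, h⟩ | ⟨h, _⟩
          · exact h
          · exact absurd hq.1.2 (Set.disjoint_right.mp hdisj h)
        exact Set.disjoint_left.mp hdisj hp.1.2 (h1 ▸ hq2B)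
    · intro e he
      rw [SimpleGraph.mem_edgeFinset] at he
      induction e with
      | _ u v =>
        rw [SimpleGraph.mem_edgeSet] at he
        rcases hbip u v he with ⟨hu, _⟩ | ⟨_, hv⟩
        · exact ⟨⟨u, v⟩, by simp [hAf, SimpleGraph.mem_neighborFinset, he, hu], rfl⟩
        · exact ⟨⟨v, u⟩, by simp [hAf, SimpleGraph.mem_neighborFinset, he.symm, hv],
            Sym2.eq_swap⟩
  -- case on the number of vertices
  rcases le_or_gt (Fintype.card V) 1 with hcard | hcard
  · have : H.edgeFinset.card = 0 := by omega
    simp [this]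
  · -- every vertex has positive degree
    have hdeg : ∀ v : V, 1 ≤ H.degree v := by
      intro v
      obtain ⟨w, hw⟩ := Fintype.exists_ne_of_one_lt_card hcard v
      obtain ⟨p⟩ := hT.isConnected.preconnected v w
      have : 0 < H.degree v := by
        rw [SimpleGraph.degree_pos_iff_exists_adj]
        cases p with
        | nil => exact absurd rfl hw.symm
        | cons h q => exact ⟨_, h⟩
      omega
    -- key inequality: sum of degrees over A + |L| ≥ 2|A|
    have hkey : 2 * Af.card ≤ (∑ v ∈ Af, H.degree v) + L.card := by
      have hLsub : L ⊆ Af := by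
        intro v hv; simp [hLdef] at hv; simp [hAf, hv.1]
      calc 2 * Af.card = ∑ v ∈ Af, 2 := by rw [Finset.sum_const]; ring
        _ ≤ ∑ v ∈ Af, (H.degree v + if v ∈ L then 1 else 0) := by
            apply Finset.sum_le_sum
            intro v hv
            by_cases hle : H.degree v ≤ 1
            · have hvL : v ∈ L := by
                simp [hLdef, hle]; simpa [hAf] using hv
              have := hdeg v
              simp [hvL]; omega
            · split_ifs <;> omega
        _ = (∑ v ∈ Af, H.degree v) + L.card := by
            rw [Finset.sum_add_distrib, Finset.sum_ite_mem,
              Finset.inter_eq_right.mpr hLsub, Finset.sum_const]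
            simp
    rw [hsum] at hkey
    omega
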